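/- For any code of length n in which each coded block has entropy M/k and has locality r, the minimum distance satisfies d ≤ n - ⌈k/r⌉ - k + 2. -/
import Mathlib


/-- For any code of length `n` in which each coded block has entropy
`M/k` and has locality `r`, the minimum distance satisfies
`d ≤ n - ⌈k/r⌉ - k + 2`.  The minimum distance hypothesis states that any
`n - d + 1` blocks have entropy at least `M` (i.e. reconstruct the file). -/
theorem stmt_1 (n k r d : ℕ) (M : ℝ) (hM : 0 < M) (hk : 0 < k) (hr : 0 < r)
    (hd1 : 1 ≤ d) (hdn : d ≤ n)
    (H : Finset (Fin n) → ℝ)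
    (hH0 : H ∅ = 0)
    (hmono : ∀ S T : Finset (Fin n), S ⊆ T → H S ≤ H T)
    (hsub : ∀ S T : Finset (Fin n), H (S ∪ T) + H (S ∩ T) ≤ H S + H T)
    (hsingle : ∀ i : Fin n, H {i} = M / k)
    (hloc : ∀ i : Fin n, ∃ R : Finset (Fin n),
      i ∉ R ∧ R.card ≤ r ∧ H (insert i R) = H R)
    (hdist : ∀ S : Finset (Fin n), n - d + 1 ≤ S.card → M ≤ H S) :
    (d : ℤ) ≤ (n : ℤ) - ⌈(k : ℚ) / (r : ℚ)⌉ - (k : ℤ) + 2 := by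
  set q : ℝ := M / k with hq
  have hq0 : 0 < q := div_pos hM (by exact_mod_cast hk)
  have hHnn : ∀ S : Finset (Fin n), 0 ≤ H S := by
    intro S
    have := hmono ∅ S (Finset.empty_subset S)
    linarith [this, hH0.ge, hH0.le]
  -- adding one element costs at most q
  have hone : ∀ (X : Finset (Fin n)) (a : Fin n), H (insert a X) ≤ H X + q := by
    intro X a
    have h1 := hsub X {a}
    have h2 : X ∪ {a} = insert a X := by
      rw [Finset.union_comm, ← Finset.insert_eq]
    rw [h2, hsingle a] at h1
    have := hHnn (X ∩ {a})
    linarith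
  -- adding a finite set T costs at most |T| * q
  have hmany : ∀ (T S : Finset (Fin n)), H (S ∪ T) ≤ H S + T.card * q := by
    intro T
    induction T using Finset.induction_on with
    | empty => intro S; simp
    | @insert a T' ha ih =>
      intro S
      have h1 : S ∪ insert a T' = insert a (S ∪ T') := by
        ext x; simp [or_comm, or_assoc, or_left_comm]
      rw [h1, Finset.card_insert_of_notMem ha]
      have h2 := hone (S ∪ T') a
      have h3 := ih S
      push_cast
      linarith
  -- locality extension
  have hext : ∀ (i : Fin n) (R A : Finset (Fin n)), R ⊆ A → i ∉ A →
      H (insert i R) = H R → H (insert i A) = H A := by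
    intro i R A hRA hiA hiR
    have hu : insert i R ∪ A = insert i A := by
      rw [Finset.insert_union, Finset.union_eq_right.mpr hRA]
    have hi2 : insert i R ∩ A = R := by
      ext x
      simp only [Finset.mem_inter, Finset.mem_insert]
      constructor
      · rintro ⟨hx | hx, hxA⟩
        · exact absurd (hx ▸ hxA) hiA
        · exact hx
      · intro hx; exact ⟨Or.inr hx, hRA hx⟩
    have h1 := hsub (insert i R) A
    rw [hu, hi2, hiR] at h1
    have h2 := hmono A (insert i A) (Finset.subset_insert i A)
    linarith
  -- greedy construction
  have greedy : ∀ j : ℕ, j * (r + 1) ≤ n → ∃ S : Finset (Fin n),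
      S.card ≤ j * (r + 1) ∧ j ≤ S.card ∧ H S ≤ ((S.card : ℝ) - j) * q := by
    intro j
    induction j with
    | zero => intro _; exact ⟨∅, by simp, by simp, by simp [hH0]⟩
    | succ j ih =>
      intro hjn
      have hjn' : j * (r + 1) + (r + 1) ≤ n := by
        have : (j + 1) * (r + 1) = j * (r + 1) + (r + 1) := by ring
        omega
      obtain ⟨S, hS1, hS2, hS3⟩ := ih (by omega)
      have hcard_lt : S.card < n := by omega
      have : ∃ i : Fin n, i ∉ S := by
        by_contra h
        push_neg at h
        have : S = Finset.univ := Finset.eq_univ_iff_forall.mpr h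
        rw [this, Finset.card_univ, Fintype.card_fin] at hcard_lt
        omega
      obtain ⟨i, hiS⟩ := this
      obtain ⟨R, hiR, hRr, hRloc⟩ := hloc i
      set A : Finset (Fin n) := S ∪ R with hA
      have hiA : i ∉ A := by simp [hA, hiS, hiR]
      refine ⟨insert i A, ?_, ?_, ?_⟩
      · have h1 : A = S ∪ (R \ S) := by
          rw [Finset.union_sdiff_self_eq_union]
        have h2 : A.card = S.card + (R \ S).card := by
          rw [h1, Finset.card_union_of_disjoint (Finset.disjoint_sdiff)]
        have h3 : (R \ S).card ≤ r := le_trans (Finset.card_le_card (Finset.sdiff_subset)) hRr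
        have h4 : (insert i A).card = A.card + 1 := Finset.card_insert_of_notMem hiA
        have : (j + 1) * (r + 1) = j * (r + 1) + r + 1 := by ring
        omega
      · have h4 : (insert i A).card = A.card + 1 := Finset.card_insert_of_notMem hiA
        have h5 : S.card ≤ A.card := Finset.card_le_card (Finset.subset_union_left)
        omega
      · have hEq : H (insert i A) = H A :=
          hext i R A (Finset.subset_union_right) hiA hRloc
        have h1 : A = S ∪ (R \ S) := by
          rw [Finset.union_sdiff_self_eq_union]
        have h2 : A.card = S.card + (R \ S).card := by
          rw [h1, Finset.card_union_of_disjoint (Finset.disjoint_sdiff)]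
        have h4 : (insert i A).card = A.card + 1 := Finset.card_insert_of_notMem hiA
        have h6 : H A ≤ H S + (R \ S).card * q := by
          rw [h1]; exact hmany (R \ S) S
        have hexp : (((insert i A).card : ℝ) - (j + 1)) * q
            = ((S.card : ℝ) - j) * q + ((R \ S).card : ℝ) * q := by
          rw [h4, h2]; push_cast; ring
        have hj1 : ((j + 1 : ℕ) : ℝ) = (j : ℝ) + 1 := by push_cast; ring
        rw [hEq, hj1, hexp]
        linarith
  -- main argument
  by_contra hcon
  push_neg at hcon
  set c : ℤ := ⌈(k : ℚ) / (r : ℚ)⌉ with hc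
  have hr' : (0 : ℚ) < (r : ℚ) := by exact_mod_cast hr
  have hk' : (0 : ℚ) < (k : ℚ) := by exact_mod_cast hk
  have hc1 : 1 ≤ c := Int.ceil_pos.mpr (div_pos hk' hr')
  have hcr : (c - 1) * (r : ℤ) ≤ (k : ℤ) - 1 := by
    have h1 : (c : ℚ) < (k : ℚ) / (r : ℚ) + 1 := Int.ceil_lt_add_one _
    have h2 : ((c : ℚ) - 1) * (r : ℚ) < (k : ℚ) := by
      rw [← lt_div_iff₀ hr']; linarith
    have h3 : ((c - 1) * (r : ℤ) : ℚ) < (k : ℚ) := by push_cast; linarith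
    have h4 : (c - 1) * (r : ℤ) < (k : ℤ) := by exact_mod_cast h3
    omega
  set s : ℕ := n - d + 1 with hs
  have hsZ : (s : ℤ) = (n : ℤ) - d + 1 := by omega
  have hskc : (s : ℤ) ≤ (k : ℤ) + c - 2 := by omega
  set t : ℕ := s - (k - 1) with ht
  have htc : (t : ℤ) ≤ c - 1 := by omega
  have htr : (t : ℤ) * r ≤ (k : ℤ) - 1 := by
    have := mul_le_mul_of_nonneg_right htc (by positivity : (0 : ℤ) ≤ (r : ℤ))
    linarith
  have htrN : t * r ≤ k - 1 := by
    have : ((t * r : ℕ) : ℤ) ≤ (k : ℤ) - 1 := by push_cast; linarith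
    omega
  have hsn : s ≤ n := by omega
  have htsize : t * (r + 1) ≤ s := by
    rcases Nat.eq_zero_or_pos t with h0 | h0
    · simp [h0]
    · have h2 : (t : ℤ) + ((k : ℤ) - 1) ≤ (s : ℤ) := by omega
      have h3 : (t : ℤ) * ((r : ℤ) + 1) = (t : ℤ) * r + t := by ring
      have h5 : ((n - d : ℕ) : ℤ) = (n : ℤ) - d := by omega
      have h4 : ((t * (r + 1) : ℕ) : ℤ) ≤ (s : ℤ) := by
        push_cast
        linarith [htr, h2, h3, h5, hsZ]
      exact_mod_cast h4
  obtain ⟨S, hS1, hS2, hS3⟩ := greedy t (le_trans htsize hsn)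
  have hScard : S.card ≤ s := le_trans hS1 htsize
  obtain ⟨T, hST, hTcard⟩ := Finset.exists_superset_card_eq hScard
    (by rw [Fintype.card_fin]; exact hsn)
  have hTH : M ≤ H T := hdist T (by omega)
  have hTu : T = S ∪ (T \ S) := (Finset.union_sdiff_of_subset hST).symm
  have hTsd : (T \ S).card = s - S.card := by
    rw [Finset.card_sdiff_of_subset hST, hTcard]
  have h6 : H T ≤ H S + ((T \ S).card : ℝ) * q := by
    conv_lhs => rw [hTu]
    exact hmany (T \ S) S
  have hcast : ((T \ S).card : ℝ) = (s : ℝ) - S.card := by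
    rw [hTsd]; push_cast [Nat.cast_sub hScard]; ring
  have hst : (s : ℝ) - t ≤ (k : ℝ) - 1 := by
    have h1 : s + 1 ≤ t + k := by omega
    have h2 : ((s : ℝ)) + 1 ≤ (t : ℝ) + k := by exact_mod_cast h1
    linarith
  have hfin : H T ≤ ((k : ℝ) - 1) * q := by
    have : H T ≤ ((s : ℝ) - t) * q := by
      rw [hcast] at h6
      have hexp : ((s : ℝ) - t) * q = ((S.card : ℝ) - t) * q + ((s : ℝ) - S.card) * q := by ring
      rw [hexp]
      linarith
    calc H T ≤ ((s : ℝ) - t) * q := this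
      _ ≤ ((k : ℝ) - 1) * q := by
          apply mul_le_mul_of_nonneg_right hst hq0.le
  have hkq : ((k : ℝ) - 1) * q < M := by
    have : (k : ℝ) * q = M := by
      rw [hq]; field_simp
    nlinarith
  linarith
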